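/- Let K be a field of characteristic not 2, V a K-vector space of dimension 3, and Q a quadratic form on V. Then for every element x of the Clifford algebra of Q there exists d : K such that, writing conj y := reverse (involute y), all four products x * reverse x * involute x * conj x, x * involute x * reverse x * conj x, x * conj x * involute x * reverse x, and x * conj x * reverse x * involute x equal algebraMap d. (These are the paper's four three-dimensional grade-negated product determinant formulas Det(A) = A⟦A⟧₂₃⟦A⟧₁₃⟦A⟧₁₂ = A⟦A⟧₁₃⟦A⟧₂₃⟦A⟧₁₂ = A⟦A⟧₁₂⟦A⟧₁₃⟦A⟧₂₃ = A⟦A⟧₁₂⟦A⟧₂₃⟦A⟧₁₃, all equal to the same determinant.) -/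

import Mathlib

open CliffordAlgebra

namespace DetDim3Aux

variable {K V : Type*} [Field K] [AddCommGroup V] [Module K V]
  {Q : QuadraticForm K V}

/-- The spanning submodule generated by the 8 basis monomials. -/
def M (Q : QuadraticForm K V) (e : Module.Basis (Fin 3) K V) :
    Submodule K (CliffordAlgebra Q) :=
  Submodule.span K
    {1, ι Q (e 0), ι Q (e 1), ι Q (e 2),
     ι Q (e 0) * ι Q (e 1), ι Q (e 0) * ι Q (e 2), ι Q (e 1) * ι Q (e 2),
     ι Q (e 0) * (ι Q (e 1) * ι Q (e 2))}

section basis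

variable (e : Module.Basis (Fin 3) K V)
  (ho : ∀ i j : Fin 3, i ≠ j → Q.IsOrtho (e i) (e j))

lemma mulalg (x : CliffordAlgebra Q) (c : K) :
    x * algebraMap K (CliffordAlgebra Q) c = c • x := by
  rw [← Algebra.commutes, ← Algebra.smul_def]

include ho in
lemma aux_comm : (ι Q (e 1) * ι Q (e 2)) * ι Q (e 0)
    = ι Q (e 0) * (ι Q (e 1) * ι Q (e 2)) := by
  rw [mul_assoc, ι_mul_ι_comm_of_isOrtho (ho 2 0 (by decide)), mul_neg,
    ι_mul_ι_mul_of_isOrtho _ (ho 1 0 (by decide)), neg_neg]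

include ho in
lemma rev_omega : reverse (ι Q (e 0) * (ι Q (e 1) * ι Q (e 2)))
    = -(ι Q (e 0) * (ι Q (e 1) * ι Q (e 2))) := by
  rw [reverse.map_mul, reverse.map_mul, reverse_ι, reverse_ι, reverse_ι,
    ι_mul_ι_comm_of_isOrtho (ho 2 1 (by decide)), neg_mul, aux_comm e ho]

include ho in
lemma mulA (i : Fin 3) : ∀ y ∈ M Q e, ι Q (e i) * y ∈ M Q e := by
  have h0 : (1 : CliffordAlgebra Q) ∈ M Q e := Submodule.subset_span (Set.mem_insert _ _)
  have h1 : ι Q (e 0) ∈ M Q e := Submodule.subset_span (Set.mem_insert_of_mem _ (Set.mem_insert _ _))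
  have h2 : ι Q (e 1) ∈ M Q e := Submodule.subset_span (Set.mem_insert_of_mem _ (Set.mem_insert_of_mem _ (Set.mem_insert _ _)))
  have h3 : ι Q (e 2) ∈ M Q e := Submodule.subset_span (Set.mem_insert_of_mem _ (Set.mem_insert_of_mem _ (Set.mem_insert_of_mem _ (Set.mem_insert _ _))))
  have h4 : ι Q (e 0) * ι Q (e 1) ∈ M Q e := Submodule.subset_span (Set.mem_insert_of_mem _ (Set.mem_insert_of_mem _ (Set.mem_insert_of_mem _ (Set.mem_insert_of_mem _ (Set.mem_insert _ _)))))
  have h5 : ι Q (e 0) * ι Q (e 2) ∈ M Q e := Submodule.subset_span (Set.mem_insert_of_mem _ (Set.mem_insert_of_mem _ (Set.mem_insert_of_mem _ (Set.mem_insert_of_mem _ (Set.mem_insert_of_mem _ (Set.mem_insert _ _))))))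
  have h6 : ι Q (e 1) * ι Q (e 2) ∈ M Q e := Submodule.subset_span (Set.mem_insert_of_mem _ (Set.mem_insert_of_mem _ (Set.mem_insert_of_mem _ (Set.mem_insert_of_mem _ (Set.mem_insert_of_mem _ (Set.mem_insert_of_mem _ (Set.mem_insert _ _)))))))
  have h7 : ι Q (e 0) * (ι Q (e 1) * ι Q (e 2)) ∈ M Q e :=
    Submodule.subset_span (Set.mem_insert_of_mem _ (Set.mem_insert_of_mem _ (Set.mem_insert_of_mem _ (Set.mem_insert_of_mem _ (Set.mem_insert_of_mem _ (Set.mem_insert_of_mem _ (Set.mem_insert_of_mem _ (Set.mem_singleton _))))))))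
  have hsq : ∀ j : Fin 3, ι Q (e j) * ι Q (e j)
      = algebraMap K (CliffordAlgebra Q) (Q (e j)) := fun j => ι_sq_scalar Q (e j)
  intro y hy
  induction hy using Submodule.span_induction with
  | zero => simpa using Submodule.zero_mem _
  | add a b _ _ ha hb => rw [mul_add]; exact Submodule.add_mem _ ha hb
  | smul c a _ ha => rw [mul_smul_comm]; exact Submodule.smul_mem _ _ ha
  | mem m hm =>
    simp only [Set.mem_insert_iff, Set.mem_singleton_iff] at hm
    have hi3 : i = 0 ∨ i = 1 ∨ i = 2 := by fin_cases i <;> simp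
    rcases hi3 with rfl | rfl | rfl <;>
      rcases hm with rfl | rfl | rfl | rfl | rfl | rfl | rfl | rfl
    -- i = 0
    · rw [mul_one]; exact h1
    · rw [hsq 0, Algebra.algebraMap_eq_smul_one]; exact Submodule.smul_mem _ _ h0
    · exact h4
    · exact h5
    · rw [← mul_assoc, hsq 0, ← Algebra.smul_def]
      exact Submodule.smul_mem _ _ h2
    · rw [← mul_assoc, hsq 0, ← Algebra.smul_def]
      exact Submodule.smul_mem _ _ h3
    · exact h7
    · rw [← mul_assoc, hsq 0, ← Algebra.smul_def]
      exact Submodule.smul_mem _ _ h6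
    -- i = 1
    · rw [mul_one]; exact h2
    · rw [ι_mul_ι_comm_of_isOrtho (ho 1 0 (by decide))]
      exact Submodule.neg_mem _ h4
    · rw [hsq 1, Algebra.algebraMap_eq_smul_one]; exact Submodule.smul_mem _ _ h0
    · exact h6
    · rw [ι_mul_ι_mul_of_isOrtho _ (ho 1 0 (by decide)), hsq 1, mulalg]
      exact Submodule.neg_mem _ (Submodule.smul_mem _ _ h1)
    · rw [ι_mul_ι_mul_of_isOrtho _ (ho 1 0 (by decide))]
      exact Submodule.neg_mem _ h7
    · rw [← mul_assoc, hsq 1, ← Algebra.smul_def]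
      exact Submodule.smul_mem _ _ h3
    · have inner : ι Q (e 1) * (ι Q (e 1) * ι Q (e 2)) = Q (e 1) • ι Q (e 2) := by
        rw [← mul_assoc, hsq 1, ← Algebra.smul_def]
      rw [ι_mul_ι_mul_of_isOrtho _ (ho 1 0 (by decide)), inner, mul_smul_comm]
      exact Submodule.neg_mem _ (Submodule.smul_mem _ _ h5)
    -- i = 2
    · rw [mul_one]; exact h3
    · rw [ι_mul_ι_comm_of_isOrtho (ho 2 0 (by decide))]
      exact Submodule.neg_mem _ h5
    · rw [ι_mul_ι_comm_of_isOrtho (ho 2 1 (by decide))]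
      exact Submodule.neg_mem _ h6
    · rw [hsq 2, Algebra.algebraMap_eq_smul_one]; exact Submodule.smul_mem _ _ h0
    · rw [ι_mul_ι_mul_of_isOrtho _ (ho 2 0 (by decide)),
        ι_mul_ι_comm_of_isOrtho (ho 2 1 (by decide)), mul_neg, neg_neg]
      exact h7
    · rw [ι_mul_ι_mul_of_isOrtho _ (ho 2 0 (by decide)), hsq 2, mulalg]
      exact Submodule.neg_mem _ (Submodule.smul_mem _ _ h1)
    · rw [ι_mul_ι_mul_of_isOrtho _ (ho 2 1 (by decide)), hsq 2, mulalg]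
      exact Submodule.neg_mem _ (Submodule.smul_mem _ _ h2)
    · have inner : ι Q (e 2) * (ι Q (e 1) * ι Q (e 2))
          = -(Q (e 2) • ι Q (e 1)) := by
        rw [ι_mul_ι_mul_of_isOrtho _ (ho 2 1 (by decide)), hsq 2, mulalg]
      rw [ι_mul_ι_mul_of_isOrtho _ (ho 2 0 (by decide)), inner, mul_neg, neg_neg,
        mul_smul_comm]
      exact Submodule.smul_mem _ _ h4

include ho in
lemma mem_M_top : ∀ x : CliffordAlgebra Q, x ∈ M Q e := by
  have h0 : (1 : CliffordAlgebra Q) ∈ M Q e := Submodule.subset_span (Set.mem_insert _ _)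
  have key : ∀ x : CliffordAlgebra Q, ∀ z ∈ M Q e, x * z ∈ M Q e := by
    intro x
    induction x using CliffordAlgebra.induction with
    | algebraMap r =>
      intro z hz
      rw [← Algebra.smul_def]
      exact Submodule.smul_mem _ _ hz
    | ι v =>
      intro z hz
      have hv : ι Q v = ∑ i : Fin 3, e.repr v i • ι Q (e i) := by
        conv_lhs => rw [← Module.Basis.sum_repr e v]
        rw [map_sum]
        simp
      rw [hv, Finset.sum_mul]
      refine Submodule.sum_mem _ fun i _ => ?_
      rw [smul_mul_assoc]
      exact Submodule.smul_mem _ _ (mulA e ho i z hz)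
    | mul a b ha hb =>
      intro z hz
      rw [mul_assoc]
      exact ha _ (hb _ hz)
    | add a b ha hb =>
      intro z hz
      rw [add_mul]
      exact Submodule.add_mem _ (ha _ hz) (hb _ hz)
  intro x
  simpa using key x 1 h0

include ho in
/-- Lemma A: `y + involute y + reverse y + conj y` is a scalar. -/
lemma psi_scalar (y : CliffordAlgebra Q) :
    ∃ c : K, y + involute y + reverse y + reverse (involute y)
      = algebraMap K (CliffordAlgebra Q) c := by
  have hy := mem_M_top e ho y
  induction hy using Submodule.span_induction with
  | zero => exact ⟨0, by simp⟩
  | add a b _ _ ha hb =>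
    obtain ⟨c1, hc1⟩ := ha
    obtain ⟨c2, hc2⟩ := hb
    refine ⟨c1 + c2, ?_⟩
    rw [map_add, map_add, map_add, map_add,
      show a + b + (involute a + involute b) + (reverse a + reverse b) +
        (reverse (involute a) + reverse (involute b)) =
        a + involute a + reverse a + reverse (involute a) +
        (b + involute b + reverse b + reverse (involute b)) by abel,
      hc1, hc2]
  | smul c a _ ha =>
    obtain ⟨c1, hc1⟩ := ha
    refine ⟨c * c1, ?_⟩
    rw [map_smul, map_smul, map_smul, ← smul_add, ← smul_add, ← smul_add, hc1,
      map_mul, Algebra.smul_def]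
  | mem m hm =>
    simp only [Set.mem_insert_iff, Set.mem_singleton_iff] at hm
    rcases hm with rfl | rfl | rfl | rfl | rfl | rfl | rfl | rfl
    · refine ⟨4, ?_⟩
      simp only [map_one, reverse.map_one, map_ofNat]
      norm_num
    · exact ⟨0, by simp [involute_ι, reverse_ι]⟩
    · exact ⟨0, by simp [involute_ι, reverse_ι]⟩
    · exact ⟨0, by simp [involute_ι, reverse_ι]⟩
    · refine ⟨0, ?_⟩
      have hi : involute (ι Q (e 0) * ι Q (e 1)) = ι Q (e 0) * ι Q (e 1) := by
        simp [involute_ι]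
      have hr : reverse (ι Q (e 0) * ι Q (e 1)) = -(ι Q (e 0) * ι Q (e 1)) := by
        rw [reverse.map_mul, reverse_ι, reverse_ι,
          ι_mul_ι_comm_of_isOrtho (ho 1 0 (by decide))]
      rw [hi, hr, show (algebraMap K (CliffordAlgebra Q)) 0 = 0 from map_zero _]; abel
    · refine ⟨0, ?_⟩
      have hi : involute (ι Q (e 0) * ι Q (e 2)) = ι Q (e 0) * ι Q (e 2) := by
        simp [involute_ι]
      have hr : reverse (ι Q (e 0) * ι Q (e 2)) = -(ι Q (e 0) * ι Q (e 2)) := by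
        rw [reverse.map_mul, reverse_ι, reverse_ι,
          ι_mul_ι_comm_of_isOrtho (ho 2 0 (by decide))]
      rw [hi, hr, show (algebraMap K (CliffordAlgebra Q)) 0 = 0 from map_zero _]; abel
    · refine ⟨0, ?_⟩
      have hi : involute (ι Q (e 1) * ι Q (e 2)) = ι Q (e 1) * ι Q (e 2) := by
        simp [involute_ι]
      have hr : reverse (ι Q (e 1) * ι Q (e 2)) = -(ι Q (e 1) * ι Q (e 2)) := by
        rw [reverse.map_mul, reverse_ι, reverse_ι,
          ι_mul_ι_comm_of_isOrtho (ho 2 1 (by decide))]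
      rw [hi, hr, show (algebraMap K (CliffordAlgebra Q)) 0 = 0 from map_zero _]; abel
    · refine ⟨0, ?_⟩
      have hi : involute (ι Q (e 0) * (ι Q (e 1) * ι Q (e 2)))
          = -(ι Q (e 0) * (ι Q (e 1) * ι Q (e 2))) := by
        simp [involute_ι, neg_mul, mul_neg]
      rw [hi, map_neg, rev_omega e ho, show (algebraMap K (CliffordAlgebra Q)) 0 = 0 from map_zero _]; abel

include ho in
/-- The pseudoscalar is central. -/
lemma omega_central (z : CliffordAlgebra Q) :
    Commute (ι Q (e 0) * (ι Q (e 1) * ι Q (e 2))) z := by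
  induction z using CliffordAlgebra.induction with
  | algebraMap r => exact Algebra.commute_algebraMap_right r _
  | add a b ha hb => exact ha.add_right hb
  | mul a b ha hb => exact ha.mul_right hb
  | ι v =>
    have hgen0 : Commute (ι Q (e 0) * (ι Q (e 1) * ι Q (e 2))) (ι Q (e 0)) := by
      show _ = _
      rw [mul_assoc, aux_comm e ho]
    have hgen1 : Commute (ι Q (e 0) * (ι Q (e 1) * ι Q (e 2))) (ι Q (e 1)) := by
      show _ = _
      have l : (ι Q (e 0) * (ι Q (e 1) * ι Q (e 2))) * ι Q (e 1)
          = -(ι Q (e 0) * (ι Q (e 1) * (ι Q (e 1) * ι Q (e 2)))) := by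
        rw [mul_assoc, mul_assoc, ι_mul_ι_comm_of_isOrtho (ho 2 1 (by decide)),
          mul_neg, mul_neg]
      have r : ι Q (e 1) * (ι Q (e 0) * (ι Q (e 1) * ι Q (e 2)))
          = -(ι Q (e 0) * (ι Q (e 1) * (ι Q (e 1) * ι Q (e 2)))) :=
        ι_mul_ι_mul_of_isOrtho _ (ho 1 0 (by decide))
      rw [l, r]
    have hgen2 : Commute (ι Q (e 0) * (ι Q (e 1) * ι Q (e 2))) (ι Q (e 2)) := by
      show _ = _
      have l : (ι Q (e 0) * (ι Q (e 1) * ι Q (e 2))) * ι Q (e 2)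
          = ι Q (e 0) * (ι Q (e 1) * (ι Q (e 2) * ι Q (e 2))) := by
        rw [mul_assoc, mul_assoc]
      have r : ι Q (e 2) * (ι Q (e 0) * (ι Q (e 1) * ι Q (e 2)))
          = ι Q (e 0) * (ι Q (e 1) * (ι Q (e 2) * ι Q (e 2))) := by
        rw [ι_mul_ι_mul_of_isOrtho _ (ho 2 0 (by decide)),
          ι_mul_ι_mul_of_isOrtho _ (ho 2 1 (by decide)), mul_neg, neg_neg]
      rw [l, r]
    have hv : ι Q v = ∑ i : Fin 3, e.repr v i • ι Q (e i) := by
      conv_lhs => rw [← Module.Basis.sum_repr e v]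
      rw [map_sum]
      simp
    rw [hv, Fin.sum_univ_three]
    exact ((hgen0.smul_right _).add_right (hgen1.smul_right _)).add_right
      (hgen2.smul_right _)

include ho in
/-- Lemma B: `y + conj y` is central. -/
lemma phi_central (y : CliffordAlgebra Q) :
    y + reverse (involute y) ∈ Subalgebra.center K (CliffordAlgebra Q) := by
  have homega : ι Q (e 0) * (ι Q (e 1) * ι Q (e 2))
      ∈ Subalgebra.center K (CliffordAlgebra Q) :=
    Subalgebra.mem_center_iff.mpr fun b => ((omega_central e ho b).symm).eq
  have hy := mem_M_top e ho y
  induction hy using Submodule.span_induction with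
  | zero => simpa using Subalgebra.zero_mem _
  | add a b _ _ ha hb =>
    rw [show a + b + reverse (involute (a + b)) =
      (a + reverse (involute a)) + (b + reverse (involute b)) by
        rw [map_add, map_add]; abel]
    exact Subalgebra.add_mem _ ha hb
  | smul c a _ ha =>
    rw [show c • a + reverse (involute (c • a)) =
      c • (a + reverse (involute a)) by rw [map_smul, map_smul, smul_add]]
    exact Subalgebra.smul_mem _ ha c
  | mem m hm =>
    simp only [Set.mem_insert_iff, Set.mem_singleton_iff] at hm
    rcases hm with rfl | rfl | rfl | rfl | rfl | rfl | rfl | rfl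
    · rw [show (1 : CliffordAlgebra Q) + reverse (involute 1) = 1 + 1 by
        rw [map_one, reverse.map_one]]
      exact Subalgebra.add_mem _ (Subalgebra.one_mem _) (Subalgebra.one_mem _)
    · rw [show ι Q (e 0) + reverse (involute (ι Q (e 0))) = 0 by
        simp [involute_ι, reverse_ι]]
      exact Subalgebra.zero_mem _
    · rw [show ι Q (e 1) + reverse (involute (ι Q (e 1))) = 0 by
        simp [involute_ι, reverse_ι]]
      exact Subalgebra.zero_mem _
    · rw [show ι Q (e 2) + reverse (involute (ι Q (e 2))) = 0 by
        simp [involute_ι, reverse_ι]]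
      exact Subalgebra.zero_mem _
    · rw [show ι Q (e 0) * ι Q (e 1) + reverse (involute (ι Q (e 0) * ι Q (e 1)))
          = 0 by
        have hi : involute (ι Q (e 0) * ι Q (e 1)) = ι Q (e 0) * ι Q (e 1) := by
          simp [involute_ι]
        rw [hi, reverse.map_mul, reverse_ι, reverse_ι,
          ι_mul_ι_comm_of_isOrtho (ho 1 0 (by decide))]
        abel]
      exact Subalgebra.zero_mem _
    · rw [show ι Q (e 0) * ι Q (e 2) + reverse (involute (ι Q (e 0) * ι Q (e 2)))
          = 0 by
        have hi : involute (ι Q (e 0) * ι Q (e 2)) = ι Q (e 0) * ι Q (e 2) := by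
          simp [involute_ι]
        rw [hi, reverse.map_mul, reverse_ι, reverse_ι,
          ι_mul_ι_comm_of_isOrtho (ho 2 0 (by decide))]
        abel]
      exact Subalgebra.zero_mem _
    · rw [show ι Q (e 1) * ι Q (e 2) + reverse (involute (ι Q (e 1) * ι Q (e 2)))
          = 0 by
        have hi : involute (ι Q (e 1) * ι Q (e 2)) = ι Q (e 1) * ι Q (e 2) := by
          simp [involute_ι]
        rw [hi, reverse.map_mul, reverse_ι, reverse_ι,
          ι_mul_ι_comm_of_isOrtho (ho 2 1 (by decide))]
        abel]
      exact Subalgebra.zero_mem _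
    · have hi : involute (ι Q (e 0) * (ι Q (e 1) * ι Q (e 2)))
          = -(ι Q (e 0) * (ι Q (e 1) * ι Q (e 2))) := by
        simp [involute_ι, neg_mul, mul_neg]
      rw [show ι Q (e 0) * (ι Q (e 1) * ι Q (e 2)) +
          reverse (involute (ι Q (e 0) * (ι Q (e 1) * ι Q (e 2))))
          = ι Q (e 0) * (ι Q (e 1) * ι Q (e 2)) +
            ι Q (e 0) * (ι Q (e 1) * ι Q (e 2)) by
        rw [hi, map_neg, rev_omega e ho, neg_neg]]
      exact Subalgebra.add_mem _ homega homega

end basis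

end DetDim3Aux

/-- In dimension 3 (char K ≠ 2), the four grade-negated products
`A ⟦A⟧₂₃ ⟦A⟧₁₃ ⟦A⟧₁₂`, `A ⟦A⟧₁₃ ⟦A⟧₂₃ ⟦A⟧₁₂`, `A ⟦A⟧₁₂ ⟦A⟧₁₃ ⟦A⟧₂₃`,
`A ⟦A⟧₁₂ ⟦A⟧₂₃ ⟦A⟧₁₃` (with `⟦·⟧₂₃ = reverse`, `⟦·⟧₁₃ = involute`,
`⟦·⟧₁₂ = conj = reverse ∘ involute`) all equal the same scalar `d`,
the determinant of `x`. -/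
theorem det_dim_three_products (K V : Type*) [Field K] [AddCommGroup V] [Module K V]
    [FiniteDimensional K V] (h2 : (2 : K) ≠ 0)
    (hdim : Module.finrank K V = 3)
    (Q : QuadraticForm K V) (x : CliffordAlgebra Q) :
    ∃ d : K,
      x * reverse x * involute x * reverse (involute x) =
        algebraMap K (CliffordAlgebra Q) d ∧
      x * involute x * reverse x * reverse (involute x) =
        algebraMap K (CliffordAlgebra Q) d ∧
      x * reverse (involute x) * involute x * reverse x =
        algebraMap K (CliffordAlgebra Q) d ∧
      x * reverse (involute x) * reverse x * involute x =
        algebraMap K (CliffordAlgebra Q) d := by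
  classical
  haveI : Invertible (2 : K) := invertibleOfNonzero h2
  obtain ⟨v0, hv0⟩ :=
    LinearMap.BilinForm.exists_orthogonal_basis
      (QuadraticForm.associated_isSymm K Q)
  let v : Module.Basis (Fin 3) K V := v0.reindex (finCongr hdim)
  have ho : ∀ i j : Fin 3, i ≠ j → Q.IsOrtho (v i) (v j) := by
    intro i j hij
    show Q.IsOrtho (v0.reindex (finCongr hdim) i) (v0.reindex (finCongr hdim) j)
    rw [Module.Basis.reindex_apply, Module.Basis.reindex_apply]
    exact QuadraticMap.associated_isOrtho.mp
      (hv0 fun h => hij ((finCongr hdim).symm.injective h))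
  -- notation
  set rx := reverse x with hrx
  set ix := involute x with hix
  set cx := reverse (involute x) with hcx
  -- conj computations
  have hcrx : reverse (involute rx) = ix := by
    rw [hrx, reverse_involute, reverse_reverse, hix]
  have hcix : reverse (involute ix) = rx := by
    rw [hix, involute_involute, hrx]
  have hccx : reverse (involute cx) = x := by
    rw [hcx, reverse_involute, reverse_reverse, involute_involute]
  -- Lemma B instances
  have lemB : ∀ y z : CliffordAlgebra Q, Commute (y + reverse (involute y)) z :=
    fun y z =>
      (Subalgebra.mem_center_iff.mp (DetDim3Aux.phi_central v ho y) z).symm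
  have step1 : ∀ y : CliffordAlgebra Q,
      y * reverse (involute y) = reverse (involute y) * y := by
    intro y
    have h := (lemB y y).eq
    rw [add_mul, mul_add] at h
    exact (add_left_cancel h).symm
  have hcent : ∀ z w : CliffordAlgebra Q,
      reverse (involute z) = z → Commute z w := by
    intro z w hz
    have h := lemB z w
    rw [hz, ← two_smul K z] at h
    have h3 := h.smul_left (2:K)⁻¹
    rwa [smul_smul, inv_mul_cancel₀ h2, one_smul] at h3
  -- the two central elements S = rx * ix and T = x * cx
  have hSconj : reverse (involute (rx * ix)) = rx * ix := by
    rw [map_mul, reverse.map_mul, hcix, hcrx]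
  have hScen : ∀ w, Commute (rx * ix) w := fun w => hcent _ w hSconj
  have hT : x * cx = cx * x := step1 x
  have hS2 : rx * ix = ix * rx := by
    have h := step1 rx
    rwa [hcrx] at h
  -- involute and reverse of S * T
  have hiS : involute (rx * ix) = x * cx := by
    rw [map_mul, hrx, hix, involute_involute, ← reverse_involute, ← hcx, hT]
  have hiT : involute (x * cx) = rx * ix := by
    rw [map_mul, hcx, ← reverse_involute, involute_involute, ← hix, ← hrx, ← hS2]
  have hrT : reverse (x * cx) = rx * ix := by
    rw [reverse.map_mul, hcx, reverse_reverse, ← hix, ← hrx, ← hS2]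
  have hrS : reverse (rx * ix) = x * cx := by
    rw [reverse.map_mul, hrx, hix, reverse_reverse, ← hcx, hT]
  have hi : involute ((rx * ix) * (x * cx)) = (rx * ix) * (x * cx) := by
    rw [map_mul, hiS, hiT, (hScen (x * cx)).eq]
  have hr : reverse ((rx * ix) * (x * cx)) = (rx * ix) * (x * cx) := by
    rw [reverse.map_mul, hrT, hrS]
  -- scalarity
  obtain ⟨c, hcc⟩ := DetDim3Aux.psi_scalar v ho ((rx * ix) * (x * cx))
  rw [hi, hr] at hcc
  have h4ne : (4 : K) ≠ 0 := by
    have : (4 : K) = 2 * 2 := by norm_num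
    rw [this]
    exact mul_ne_zero h2 h2
  have hST : (rx * ix) * (x * cx)
      = algebraMap K (CliffordAlgebra Q) ((4:K)⁻¹ * c) := by
    have h4 : (4:K) • ((rx * ix) * (x * cx))
        = algebraMap K (CliffordAlgebra Q) c := by
      rw [show (4:K) = 1 + 1 + 1 + 1 by norm_num, add_smul, add_smul, add_smul,
        one_smul]
      exact hcc
    calc (rx * ix) * (x * cx)
        = (4:K)⁻¹ • ((4:K) • ((rx * ix) * (x * cx))) := by
          rw [smul_smul, inv_mul_cancel₀ h4ne, one_smul]
      _ = (4:K)⁻¹ • algebraMap K (CliffordAlgebra Q) c := by rw [h4]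
      _ = algebraMap K (CliffordAlgebra Q) ((4:K)⁻¹ * c) := by
          rw [map_mul, Algebra.smul_def]
  refine ⟨(4:K)⁻¹ * c, ?_, ?_, ?_, ?_⟩
  · rw [mul_assoc x rx ix, ← (hScen x).eq, mul_assoc]
    exact hST
  · rw [mul_assoc x ix rx, ← hS2, ← (hScen x).eq, mul_assoc]
    exact hST
  · rw [mul_assoc (x * cx) ix rx, ← hS2, ← (hScen (x * cx)).eq]
    exact hST
  · rw [mul_assoc (x * cx) rx ix, ← (hScen (x * cx)).eq]
    exact hST
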